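/- Let Γ be a connected multigraph with edges l_1,…,l_δ, none of which is a loop. Given a δ-tuple of nonnegative integers k = (k_1,…,k_δ), let B_k(Γ) be the graph obtained by subdividing each edge l_i into a path of k_i + 1 edges. Let S = {i : k_i ≠ 0}. Then c(B_k(Γ)) = Σ_{T ⊆ S} (Π_{i∈T} k_i) · c(Γ − {l_i : i ∈ T}), where c denotes the number of spanning trees (with c = 0 for disconnected graphs). -/

import Mathlib

/-- A multigraph: a set of edges, each with an unordered pair of endpoints. -/
structure Multigraph (V E : Type) where
  ends : E → Sym2 V

namespace Multigraph

variable {V E : Type}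

/-- Adjacency via an edge lying in the subset `S`. -/
def Adj (G : Multigraph V E) (S : Set E) (x y : V) : Prop :=
  x ≠ y ∧ ∃ e ∈ S, G.ends e = s(x, y)

/-- The subgraph with edge set `S` is connected (and spans `V`). -/
def ConnectedOn (G : Multigraph V E) (S : Set E) : Prop :=
  ∀ x y : V, Relation.ReflTransGen (G.Adj S) x y

def Connected (G : Multigraph V E) : Prop := G.ConnectedOn Set.univ

/-- No edge is a loop. -/
def Loopless (G : Multigraph V E) : Prop := ∀ e : E, ¬ (G.ends e).IsDiag

/-- A spanning tree: a minimally connecting spanning set of edges. -/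
def IsSpanningTree (G : Multigraph V E) (S : Finset E) : Prop :=
  G.ConnectedOn (S : Set E) ∧ ∀ e ∈ S, ¬ G.ConnectedOn ((S : Set E) \ {e})

/-- The complexity: the number of spanning trees. -/
noncomputable def complexity (G : Multigraph V E) : ℕ :=
  {S : Finset E | G.IsSpanningTree S}.ncard

/-- Number of edges joining `x` and `y`. -/
noncomputable def edgeCount (G : Multigraph V E) (x y : V) : ℕ :=
  {e : E | G.ends e = s(x, y)}.ncard

/-- The Laplacian-type intersection matrix. -/
noncomputable def lap (G : Multigraph V E) [Fintype V] [DecidableEq V] (i j : V) : ℤ :=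
  if i = j then -(∑ u ∈ Finset.univ.erase i, (G.edgeCount i u : ℤ))
  else (G.edgeCount i j : ℤ)

/-- The lattice of multidegrees of twisters: span of the columns of the Laplacian. -/
noncomputable def lapLattice (G : Multigraph V E) [Fintype V] [DecidableEq V] :
    AddSubgroup (V → ℤ) :=
  AddSubgroup.closure (Set.range fun j => fun i => G.lap i j)

/-- The subgroup of `ℤ^V` of vectors with zero coordinate sum. -/
def zeroSum (V : Type) [Fintype V] : AddSubgroup (V → ℤ) where
  carrier := {z | ∑ v, z v = 0}
  add_mem' := by
    intro a b ha hb
    simp only [Set.mem_setOf_eq] at *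
    simp [Finset.sum_add_distrib, ha, hb]
  zero_mem' := by simp
  neg_mem' := by
    intro a ha
    simp only [Set.mem_setOf_eq] at *
    simp [ha]

/-- The degree class group of a multigraph. -/
noncomputable def DCG (G : Multigraph V E) [Fintype V] [DecidableEq V] : Type :=
  zeroSum V ⧸ (G.lapLattice.addSubgroupOf (zeroSum V))

noncomputable instance (G : Multigraph V E) [Fintype V] [DecidableEq V] :
    AddCommGroup (G.DCG) :=
  QuotientAddGroup.Quotient.addCommGroup _

/-- The class in the DCG of an element of the zero-sum lattice. -/
noncomputable def DCGclass (G : Multigraph V E) [Fintype V] [DecidableEq V]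
    (z : zeroSum V) : G.DCG :=
  QuotientAddGroup.mk z

/-- The element `e_x - e_y` of the zero-sum lattice. -/
def eDiff (V : Type) [Fintype V] [DecidableEq V] (x y : V) : zeroSum V :=
  ⟨fun v => (if v = x then 1 else 0) - (if v = y then 1 else 0), by
    show ∑ v : V, ((if v = x then (1:ℤ) else 0) - (if v = y then 1 else 0)) = 0
    simp [Finset.sum_sub_distrib]⟩

end Multigraph

namespace Multigraph
variable {V : Type}

/-- The `j`-th vertex along the subdivision chain of the `i`-th edge. -/
def subAllVert {δ : ℕ} (a b : Fin δ → V) (k : Fin δ → ℕ) (i : Fin δ) (j : ℕ) :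
    V ⊕ Σ i : Fin δ, Fin (k i) :=
  if _h0 : j = 0 then Sum.inl (a i)
  else if h : j ≤ k i then Sum.inr ⟨i, ⟨j - 1, by omega⟩⟩
  else Sum.inl (b i)

/-- Subdivide the `i`-th edge (with endpoints `a i`, `b i`) into a path of `k i + 1`
edges, for every `i`. -/
def subdivideAll {δ : ℕ} (G : Multigraph V (Fin δ)) (a b : Fin δ → V) (k : Fin δ → ℕ) :
    Multigraph (V ⊕ Σ i : Fin δ, Fin (k i)) (Σ i : Fin δ, Fin (k i + 1)) :=
  ⟨fun e => s(subAllVert a b k e.1 e.2.1, subAllVert a b k e.1 (e.2.1 + 1))⟩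

/-- Delete all edges in the set `R`. -/
def deleteEdges {E : Type} (G : Multigraph V E) (R : Set E) : Multigraph V {f : E // f ∉ R} :=
  ⟨fun f => G.ends f.1⟩

end Multigraph

namespace BlowupAux
open Multigraph

variable {V E : Type}

lemma adj_symm {G : Multigraph V E} {S : Set E} {x y : V} (h : G.Adj S x y) : G.Adj S y x := by
  obtain ⟨hxy, e, he, hend⟩ := h
  exact ⟨hxy.symm, e, he, by rw [hend, Sym2.eq_swap]⟩

lemma rtg_symm {G : Multigraph V E} {S : Set E} {x y : V}
    (h : Relation.ReflTransGen (G.Adj S) x y) : Relation.ReflTransGen (G.Adj S) y x :=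
  by haveI : Std.Symm (G.Adj S) := ⟨fun _ _ h => adj_symm h⟩; exact Std.Symm.symm _ _ h

lemma not_connectedOn {G : Multigraph V E} {S : Set E} (P : V → Prop)
    (hP : ∀ x y, G.Adj S x y → (P x ↔ P y)) {x y : V} (hx : P x) (hy : ¬ P y) :
    ¬ G.ConnectedOn S := by
  intro h
  have key : ∀ {u v : V}, Relation.ReflTransGen (G.Adj S) u v → (P u ↔ P v) := by
    intro u v huv
    induction huv with
    | refl => exact Iff.rfl
    | tail _ h ih => exact ih.trans (hP _ _ h)
  exact hy ((key (h x y)).mp hx)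

section Blowup

variable {δ : ℕ} {a b : Fin δ → V} {k : Fin δ → ℕ}

@[simp] lemma subAllVert_zero (i : Fin δ) : subAllVert a b k i 0 = Sum.inl (a i) := by
  simp [subAllVert]

lemma subAllVert_last {i : Fin δ} {j : ℕ} (h : k i < j) :
    subAllVert a b k i j = Sum.inl (b i) := by
  have : j ≠ 0 := by omega
  simp [subAllVert, this, Nat.not_le.mpr h]

lemma subAllVert_mid {i : Fin δ} {j : ℕ} (h0 : j ≠ 0) (h : j ≤ k i) :
    subAllVert a b k i j = Sum.inr ⟨i, ⟨j - 1, by omega⟩⟩ := by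
  simp [subAllVert, h0, h]

lemma subAllVert_ne {i : Fin δ} (hab : a i ≠ b i) {j : ℕ} (hj : j ≤ k i) :
    subAllVert a b k i j ≠ subAllVert a b k i (j + 1) := by
  rcases Nat.eq_zero_or_pos j with h0 | h0
  · subst h0
    rcases Nat.eq_zero_or_pos (k i) with hk | hk
    · rw [subAllVert_zero, subAllVert_last (by omega)]
      simpa using hab
    · rw [subAllVert_zero, subAllVert_mid (by omega) (by omega)]
      simp
  · rcases Nat.lt_or_ge j (k i) with h1 | h1
    · rw [subAllVert_mid (by omega) hj, subAllVert_mid (by omega) (by omega)]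
      simp only [ne_eq, Sum.inr.injEq, Sigma.mk.inj_iff, heq_eq_eq, Fin.mk.injEq, true_and]
      omega
    · have : j = k i := by omega
      subst this
      rw [subAllVert_mid (by omega) le_rfl, subAllVert_last (by omega)]
      simp

lemma subdivide_ends (G : Multigraph V (Fin δ)) (e : Σ i : Fin δ, Fin (k i + 1)) :
    (G.subdivideAll a b k).ends e
      = s(subAllVert a b k e.1 e.2.1, subAllVert a b k e.1 (e.2.1 + 1)) := rfl

end Blowup

section Blowup2

variable {δ : ℕ} {a b : Fin δ → V} {k : Fin δ → ℕ}
variable {G : Multigraph V (Fin δ)}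

/-- Walking along a chain whose segments from `p` to `q` are all present. -/
lemma chain_walk (hab : ∀ i, a i ≠ b i) (S₀ : Set (Σ i : Fin δ, Fin (k i + 1))) (i : Fin δ)
    (p q : ℕ) (hpq : p ≤ q) (hq : q ≤ k i + 1)
    (hseg : ∀ t : ℕ, p ≤ t → t < q → ∃ ht : t < k i + 1,
      (⟨i, ⟨t, ht⟩⟩ : Σ i : Fin δ, Fin (k i + 1)) ∈ S₀) :
    Relation.ReflTransGen ((G.subdivideAll a b k).Adj S₀)
      (subAllVert a b k i p) (subAllVert a b k i q) := by
  induction q, hpq using Nat.le_induction with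
  | base => exact Relation.ReflTransGen.refl
  | succ n hn ih =>
    have hstep := hseg n hn (by omega)
    obtain ⟨hlt, hmem⟩ := hstep
    refine (ih (by omega) (fun t ht ht' => hseg t ht (by omega))).tail ?_
    exact ⟨subAllVert_ne (hab i) (by omega), ⟨i, ⟨n, hlt⟩⟩, hmem, rfl⟩

/-- The projection of a blow-up vertex back to `V`, with cut-points `h`. -/
def rho (a b : Fin δ → V) (k : Fin δ → ℕ) (h : Fin δ → ℕ) :
    (V ⊕ Σ i : Fin δ, Fin (k i)) → V
  | Sum.inl x => x
  | Sum.inr ⟨i, m⟩ => if (m : ℕ) + 1 ≤ h i then a i else b i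

lemma rho_subAllVert (h : Fin δ → ℕ) (i : Fin δ) (p : ℕ) (hp : p ≤ k i + 1) :
    rho a b k h (subAllVert a b k i p)
      = if p = 0 ∨ (p ≤ h i ∧ p ≤ k i) then a i else b i := by
  rcases Nat.eq_zero_or_pos p with h0 | h0
  · subst h0; simp [rho]
  rcases Nat.lt_or_ge (k i) p with h1 | h1
  · rw [subAllVert_last h1]
    have : ¬ (p = 0 ∨ (p ≤ h i ∧ p ≤ k i)) := by omega
    simp [rho, this]
  · rw [subAllVert_mid (by omega) h1]
    simp only [rho]
    have h2 : p - 1 + 1 = p := by omega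
    rw [h2]
    by_cases h3 : p ≤ h i
    · have hor : p = 0 ∨ (p ≤ h i ∧ p ≤ k i) := by omega
      rw [if_pos h3, if_pos hor]
    · have hor : ¬ (p = 0 ∨ (p ≤ h i ∧ p ≤ k i)) := by omega
      rw [if_neg h3, if_neg hor]

/-- Projecting an adjacency step of the blow-up to the original graph. -/
lemma proj_adj (hab : ∀ i, G.ends i = s(a i, b i) ∧ a i ≠ b i)
    (S₀ : Set (Σ i : Fin δ, Fin (k i + 1))) (E₀ : Set (Fin δ)) (h : Fin δ → ℕ)
    (hcr : ∀ (i : Fin δ) (t : Fin (k i + 1)),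
      (⟨i, t⟩ : Σ i : Fin δ, Fin (k i + 1)) ∈ S₀ → (t : ℕ) = min (h i) (k i) → i ∈ E₀)
    {x y : V ⊕ Σ i : Fin δ, Fin (k i)} (hxy : (G.subdivideAll a b k).Adj S₀ x y) :
    Relation.ReflTransGen (G.Adj E₀) (rho a b k h x) (rho a b k h y) := by
  obtain ⟨hne, ⟨i, t⟩, ht, hend⟩ := hxy
  rw [subdivide_ends] at hend
  have key : Relation.ReflTransGen (G.Adj E₀)
      (rho a b k h (subAllVert a b k i (t : ℕ)))
      (rho a b k h (subAllVert a b k i ((t : ℕ) + 1))) := by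
    have htk : (t : ℕ) < k i + 1 := t.isLt
    rw [rho_subAllVert h i (t : ℕ) (by omega), rho_subAllVert h i ((t : ℕ) + 1) (by omega)]
    by_cases e1 : (t : ℕ) = 0 ∨ ((t : ℕ) ≤ h i ∧ (t : ℕ) ≤ k i)
    · by_cases e2 : (t : ℕ) + 1 = 0 ∨ ((t : ℕ) + 1 ≤ h i ∧ (t : ℕ) + 1 ≤ k i)
      · simp only [e1, e2, if_pos]
        exact Relation.ReflTransGen.refl
      · -- crossing
        have hmin : (t : ℕ) = min (h i) (k i) := by omega
        have hi : i ∈ E₀ := hcr i t ht hmin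
        simp only [e1, if_pos, e2, if_neg, not_false_iff]
        exact Relation.ReflTransGen.single ⟨(hab i).2, i, hi, (hab i).1⟩
    · have e2 : ¬ ((t : ℕ) + 1 = 0 ∨ ((t : ℕ) + 1 ≤ h i ∧ (t : ℕ) + 1 ≤ k i)) := by omega
      simp only [e1, e2, if_neg, not_false_iff]
      exact Relation.ReflTransGen.refl
  rw [Sym2.eq_iff] at hend
  rcases hend with ⟨hx, hy⟩ | ⟨hx, hy⟩
  · rw [← hx, ← hy]; exact key
  · rw [← hx, ← hy]; exact rtg_symm key

end Blowup2

section Blowup3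

variable {δ : ℕ} {a b : Fin δ → V} {k : Fin δ → ℕ}
variable {G : Multigraph V (Fin δ)}

/-- The edge set of the blow-up determined by a set `U` of complete chains and gap
positions `g` elsewhere. -/
def config (k : Fin δ → ℕ) (U : Finset (Fin δ)) (g : Fin δ → ℕ) :
    Finset (Σ i : Fin δ, Fin (k i + 1)) :=
  Finset.univ.filter fun e => e.1 ∈ U ∨ (e.2 : ℕ) ≠ g e.1

@[simp] lemma mem_config {U : Finset (Fin δ)} {g : Fin δ → ℕ}
    {e : Σ i : Fin δ, Fin (k i + 1)} :
    e ∈ config k U g ↔ e.1 ∈ U ∨ (e.2 : ℕ) ≠ g e.1 := by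
  simp [config]

lemma config_connectedOn (hab : ∀ i, G.ends i = s(a i, b i) ∧ a i ≠ b i)
    {U : Finset (Fin δ)} {g : Fin δ → ℕ} (hU : G.ConnectedOn ↑U) :
    (G.subdivideAll a b k).ConnectedOn ↑(config k U g) := by
  have habne : ∀ i, a i ≠ b i := fun i => (hab i).2
  have reach_inl : ∀ w : V ⊕ Σ i : Fin δ, Fin (k i), ∃ v : V,
      Relation.ReflTransGen ((G.subdivideAll a b k).Adj ↑(config k U g)) (Sum.inl v) w := by
    rintro (x | ⟨i, m⟩)
    · exact ⟨x, Relation.ReflTransGen.refl⟩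
    · have hmlt : (m : ℕ) < k i := m.isLt
      have hmem : Sum.inr ⟨i, m⟩ = subAllVert a b k i ((m : ℕ) + 1) := by
        rw [subAllVert_mid (by omega) (by omega)]
        simp
      by_cases hm : (m : ℕ) + 1 ≤ g i
      · refine ⟨a i, ?_⟩
        rw [hmem]
        have := chain_walk (G := G) (k := k) habne ↑(config k U g) i 0 ((m : ℕ) + 1) (by omega)
          (by omega) (fun t ht ht' => by
            refine ⟨by omega, ?_⟩
            simp only [Finset.mem_coe, mem_config]
            exact Or.inr (by omega))
        rwa [subAllVert_zero] at this
      · refine ⟨b i, ?_⟩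
        rw [hmem]
        have := chain_walk (G := G) (k := k) habne ↑(config k U g) i ((m : ℕ) + 1) (k i + 1)
          (by omega) le_rfl (fun t ht ht' => by
            refine ⟨by omega, ?_⟩
            simp only [Finset.mem_coe, mem_config]
            exact Or.inr (by omega))
        rw [subAllVert_last (i := i) (j := k i + 1) (by omega)] at this
        exact rtg_symm this
  have full_chain : ∀ i ∈ U, Relation.ReflTransGen
      ((G.subdivideAll a b k).Adj ↑(config k U g)) (Sum.inl (a i)) (Sum.inl (b i)) := by
    intro i hi
    have := chain_walk (G := G) (k := k) habne ↑(config k U g) i 0 (k i + 1) (by omega) le_rfl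
      (fun t ht ht' =>
        ⟨by omega, by simp only [Finset.mem_coe, mem_config]; exact Or.inl hi⟩)
    rwa [subAllVert_zero, subAllVert_last (i := i) (j := k i + 1) (by omega)] at this
  have inl_inl : ∀ x y : V, Relation.ReflTransGen
      ((G.subdivideAll a b k).Adj ↑(config k U g)) (Sum.inl x) (Sum.inl y) := by
    intro x y
    refine Relation.ReflTransGen.lift' Sum.inl ?_ _ _ (hU x y)
    intro x y hxy
    obtain ⟨hne, i, hi, hend⟩ := hxy
    rw [(hab i).1, Sym2.eq_iff] at hend
    rcases hend with ⟨hx, hy⟩ | ⟨hx, hy⟩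
    · rw [← hx, ← hy]; exact full_chain i hi
    · rw [← hx, ← hy]; exact rtg_symm (full_chain i hi)
  intro w w'
  obtain ⟨v, hv⟩ := reach_inl w
  obtain ⟨v', hv'⟩ := reach_inl w'
  exact (rtg_symm hv).trans ((inl_inl v v').trans hv')

/-- Two gaps in a single chain disconnect the blow-up. -/
lemma two_gaps (S₀ : Set (Σ i : Fin δ, Fin (k i + 1))) (i : Fin δ) (lo hi : ℕ)
    (hlh : lo < hi) (hhi : hi ≤ k i)
    (havoid : ∀ t : Fin (k i + 1), (⟨i, t⟩ : Σ i : Fin δ, Fin (k i + 1)) ∈ S₀ →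
      (t : ℕ) ≠ lo ∧ (t : ℕ) ≠ hi) :
    ¬ (G.subdivideAll a b k).ConnectedOn S₀ := by
  set P : (V ⊕ Σ i : Fin δ, Fin (k i)) → Prop := fun w =>
    match w with
    | Sum.inl _ => False
    | Sum.inr ⟨i', m⟩ => i' = i ∧ lo ≤ (m : ℕ) ∧ (m : ℕ) < hi with hP
  have P_pos : ∀ (i' : Fin δ) (p : ℕ), p ≤ k i' + 1 →
      (P (subAllVert a b k i' p) ↔ (i' = i ∧ lo + 1 ≤ p ∧ p ≤ hi)) := by
    intro i' p hp
    rcases Nat.eq_zero_or_pos p with h0 | h0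
    · subst h0; rw [subAllVert_zero]; simp [hP]
    rcases Nat.lt_or_ge (k i') p with h1 | h1
    · rw [subAllVert_last h1]
      simp only [hP]
      constructor
      · exact fun h => h.elim
      · rintro ⟨rfl, h2, h3⟩; omega
    · rw [subAllVert_mid (by omega) h1]
      simp only [hP]
      constructor
      · rintro ⟨rfl, h2, h3⟩; exact ⟨rfl, by omega, by omega⟩
      · rintro ⟨rfl, h2, h3⟩; exact ⟨rfl, by omega, by omega⟩
  refine not_connectedOn P ?_
    (x := Sum.inr ⟨i, ⟨lo, by omega⟩⟩) (y := Sum.inl (a i)) ?_ ?_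
  · intro x y hxy
    obtain ⟨hne, ⟨i', t⟩, ht, hend⟩ := hxy
    rw [subdivide_ends] at hend
    have key : P (subAllVert a b k i' (t : ℕ)) ↔ P (subAllVert a b k i' ((t : ℕ) + 1)) := by
      have htk : (t : ℕ) < k i' + 1 := t.isLt
      rw [P_pos i' (t : ℕ) (by omega), P_pos i' ((t : ℕ) + 1) (by omega)]
      by_cases hii : i' = i
      · subst hii
        have := havoid t ht
        constructor
        · rintro ⟨-, h2, h3⟩; exact ⟨rfl, by omega, by omega⟩
        · rintro ⟨-, h2, h3⟩; exact ⟨rfl, by omega, by omega⟩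
      · constructor
        · rintro ⟨h, -⟩; exact absurd h hii
        · rintro ⟨h, -⟩; exact absurd h hii
    rw [Sym2.eq_iff] at hend
    rcases hend with ⟨hx, hy⟩ | ⟨hx, hy⟩
    · rw [← hx, ← hy]; exact key
    · rw [← hx, ← hy]; exact key.symm
  · exact ⟨rfl, le_rfl, hlh⟩
  · simp [hP]

end Blowup3

section Blowup4

variable {δ : ℕ} {a b : Fin δ → V} {k : Fin δ → ℕ}
variable {G : Multigraph V (Fin δ)}

lemma conn_minus (hab : ∀ i, G.ends i = s(a i, b i) ∧ a i ≠ b i)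
    {U : Finset (Fin δ)} {i : Fin δ} (hc : G.ConnectedOn ↑U)
    (hR : Relation.ReflTransGen (G.Adj (↑U \ {i})) (a i) (b i)) :
    G.ConnectedOn (↑U \ {i}) := by
  intro x y
  refine Relation.ReflTransGen.lift' id ?_ _ _ (hc x y)
  intro u v huv
  obtain ⟨hne, e, he, hend⟩ := huv
  by_cases hei : e = i
  · subst hei
    rw [(hab e).1, Sym2.eq_iff] at hend
    rcases hend with ⟨hx, hy⟩ | ⟨hx, hy⟩
    · rw [← hx, ← hy]; exact hR
    · rw [← hx, ← hy]; exact rtg_symm hR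
  · exact Relation.ReflTransGen.single ⟨hne, e, ⟨he, by simpa using hei⟩, hend⟩

lemma config_isSpanningTree (hab : ∀ i, G.ends i = s(a i, b i) ∧ a i ≠ b i)
    {U : Finset (Fin δ)} {g : Fin δ → ℕ} (hU : G.IsSpanningTree U)
    (hg : ∀ i ∉ U, g i ≤ k i) :
    (G.subdivideAll a b k).IsSpanningTree (config k U g) := by
  refine ⟨config_connectedOn hab hU.1, ?_⟩
  rintro ⟨i, t⟩ he hcon
  rw [mem_config] at he
  by_cases hiU : i ∈ U
  · -- removing a segment of a tree chain disconnects
    set hfun : Fin δ → ℕ := fun i' => if i' = i then (t : ℕ) else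
      (if i' ∈ U then k i' + 1 else g i') with hfdef
    have hcr : ∀ (i' : Fin δ) (t' : Fin (k i' + 1)),
        (⟨i', t'⟩ : Σ i : Fin δ, Fin (k i + 1)) ∈
          ((↑(config k U g) : Set (Σ i : Fin δ, Fin (k i + 1))) \ {⟨i, t⟩}) →
        (t' : ℕ) = min (hfun i') (k i') → i' ∈ ((↑U : Set (Fin δ)) \ {i}) := by
      intro i' t' ht' hmin
      obtain ⟨hconf, hne'⟩ := ht'
      rw [Finset.mem_coe, mem_config] at hconf
      by_cases hii : i' = i
      · subst hii
        have hmin' : (t' : ℕ) = min (t : ℕ) (k i') := by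
          rw [hfdef] at hmin
          simpa using hmin
        have htt : t' = t := Fin.ext (by have := t.isLt; omega)
        exact absurd (by rw [htt]; exact Set.mem_singleton _) hne'
      · by_cases hiU' : i' ∈ U
        · exact ⟨hiU', by simpa using hii⟩
        · exfalso
          rw [hfdef] at hmin
          simp only [if_neg hii, if_neg hiU'] at hmin
          have := hg i' hiU'
          have : (t' : ℕ) = g i' := by omega
          rcases hconf with h | h
          · exact hiU' h
          · exact h this
    have hRab : Relation.ReflTransGen (G.Adj (↑U \ {i})) (a i) (b i) := by
      have hpath := hcon (Sum.inl (a i)) (Sum.inl (b i))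
      exact Relation.ReflTransGen.lift' (rho a b k hfun)
        (fun u v huv => proj_adj hab _ _ hfun hcr huv) _ _ hpath
    exact absurd (conn_minus hab hU.1 hRab) (hU.2 i hiU)
  · -- two gaps in the same chain
    have hne : (t : ℕ) ≠ g i := he.resolve_left hiU
    refine absurd hcon (two_gaps (G := G) _ i (min (t : ℕ) (g i)) (max (t : ℕ) (g i))
      (by omega) (by have := t.isLt; have := hg i hiU; omega) ?_)
    intro t' ht'
    obtain ⟨hconf, hne'⟩ := ht'
    rw [Finset.mem_coe, mem_config] at hconf
    have h1 : (t' : ℕ) ≠ g i := by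
      rcases hconf with h | h
      · exact absurd h hiU
      · exact h
    have h2 : (t' : ℕ) ≠ (t : ℕ) := by
      intro hval
      exact hne' (by rw [Fin.ext hval]; exact Set.mem_singleton _)
    omega

lemma tree_repr (hab : ∀ i, G.ends i = s(a i, b i) ∧ a i ≠ b i)
    {S' : Finset (Σ i : Fin δ, Fin (k i + 1))}
    (hS' : (G.subdivideAll a b k).IsSpanningTree S') :
    ∃ (U : Finset (Fin δ)) (g : Fin δ → ℕ), G.IsSpanningTree U ∧
      (∀ i ∉ U, g i ≤ k i) ∧ (∀ i ∈ U, g i = 0) ∧ S' = config k U g := by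
  classical
  have hmiss : ∀ (i : Fin δ) (t₁ t₂ : Fin (k i + 1)),
      (⟨i, t₁⟩ : Σ i : Fin δ, Fin (k i + 1)) ∉ S' →
      (⟨i, t₂⟩ : Σ i : Fin δ, Fin (k i + 1)) ∉ S' → t₁ = t₂ := by
    intro i t₁ t₂ h1 h2
    by_contra hne
    have hv : (t₁ : ℕ) ≠ (t₂ : ℕ) := fun h => hne (Fin.ext h)
    refine absurd hS'.1 (two_gaps (G := G) _ i (min (t₁ : ℕ) (t₂ : ℕ))
      (max (t₁ : ℕ) (t₂ : ℕ)) (by omega)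
      (by have := t₁.isLt; have := t₂.isLt; omega) ?_)
    intro t ht
    constructor
    · intro heq
      have : (t : ℕ) = (t₁ : ℕ) ∨ (t : ℕ) = (t₂ : ℕ) := by omega
      rcases this with h | h
      · exact h1 (by rw [← Fin.ext h]; exact ht)
      · exact h2 (by rw [← Fin.ext h]; exact ht)
    · intro heq
      have : (t : ℕ) = (t₁ : ℕ) ∨ (t : ℕ) = (t₂ : ℕ) := by omega
      rcases this with h | h
      · exact h1 (by rw [← Fin.ext h]; exact ht)
      · exact h2 (by rw [← Fin.ext h]; exact ht)
  set U : Finset (Fin δ) := Finset.univ.filter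
    (fun i : Fin δ => ∀ t : Fin (k i + 1), (⟨i, t⟩ : Σ i : Fin δ, Fin (k i + 1)) ∈ S')
    with hUdef
  have hUmem : ∀ i : Fin δ, i ∈ U ↔
      ∀ t : Fin (k i + 1), (⟨i, t⟩ : Σ i : Fin δ, Fin (k i + 1)) ∈ S' := by
    intro i; simp [hUdef]
  set g : Fin δ → ℕ := fun i =>
    if h : ∃ t : Fin (k i + 1), (⟨i, t⟩ : Σ i : Fin δ, Fin (k i + 1)) ∉ S'
    then (h.choose : ℕ) else 0 with hgdef
  have hg0 : ∀ i ∈ U, g i = 0 := by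
    intro i hi
    rw [hgdef]
    have : ¬ ∃ t : Fin (k i + 1), (⟨i, t⟩ : Σ i : Fin δ, Fin (k i + 1)) ∉ S' := by
      push_neg
      exact (hUmem i).1 hi
    simp [this]
  have hgmiss : ∀ i ∉ U, ∃ t : Fin (k i + 1), (t : ℕ) = g i ∧
      (⟨i, t⟩ : Σ i : Fin δ, Fin (k i + 1)) ∉ S' := by
    intro i hi
    have hex : ∃ t : Fin (k i + 1), (⟨i, t⟩ : Σ i : Fin δ, Fin (k i + 1)) ∉ S' := by
      by_contra hc
      push_neg at hc
      exact hi ((hUmem i).2 hc)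
    refine ⟨hex.choose, ?_, hex.choose_spec⟩
    rw [hgdef]; simp [hex]
  have hgle : ∀ i ∉ U, g i ≤ k i := by
    intro i hi
    obtain ⟨t, htv, -⟩ := hgmiss i hi
    have := t.isLt; omega
  have hconfig : S' = config k U g := by
    ext ⟨i, t⟩
    rw [mem_config]
    constructor
    · intro htS
      by_cases hiU : i ∈ U
      · exact Or.inl hiU
      · refine Or.inr ?_
        obtain ⟨t₀, ht₀v, ht₀⟩ := hgmiss i hiU
        intro heq
        exact ht₀ (by rw [Fin.ext (ht₀v.trans heq.symm : (t₀:ℕ) = (t:ℕ))]; exact htS)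
    · intro h
      by_cases hiU : i ∈ U
      · exact (hUmem i).1 hiU t
      · rcases h with h | h
        · exact absurd h hiU
        · by_contra htS
          obtain ⟨t₀, ht₀v, ht₀⟩ := hgmiss i hiU
          exact h (by rw [hmiss i t t₀ htS ht₀, ht₀v])
  have hUtree : G.IsSpanningTree U := by
    constructor
    · intro x y
      set hfun : Fin δ → ℕ := fun i => if i ∈ U then k i + 1 else g i with hfdef
      have hcr : ∀ (i : Fin δ) (t : Fin (k i + 1)),
          (⟨i, t⟩ : Σ i : Fin δ, Fin (k i + 1)) ∈ (↑S' : Set _) →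
          (t : ℕ) = min (hfun i) (k i) → i ∈ (↑U : Set (Fin δ)) := by
        intro i t ht hmin
        by_cases hiU : i ∈ U
        · exact hiU
        · exfalso
          rw [hfdef] at hmin
          simp only [if_neg hiU] at hmin
          have h1 := hgle i hiU
          have h2 : (t : ℕ) = g i := by omega
          rw [Finset.mem_coe, hconfig, mem_config] at ht
          rcases ht with h | h
          · exact hiU h
          · exact h h2
      have hpath := hS'.1 (Sum.inl x) (Sum.inl y)
      exact Relation.ReflTransGen.lift' (rho a b k hfun)
        (fun u v huv => proj_adj hab _ _ hfun hcr huv) _ _ hpath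
    · intro i hiU hcon
      have h0mem : (⟨i, (0 : Fin (k i + 1))⟩ : Σ i : Fin δ, Fin (k i + 1)) ∈ S' :=
        (hUmem i).1 hiU 0
      refine hS'.2 ⟨i, 0⟩ h0mem ?_
      have hce : ((↑S' : Set (Σ i : Fin δ, Fin (k i + 1))) \ {⟨i, 0⟩})
          = ↑(config k (U.erase i) (Function.update g i 0)) := by
        rw [hconfig]
        ext ⟨i', t'⟩
        simp only [Set.mem_diff, Finset.mem_coe, mem_config, Set.mem_singleton_iff,
          Finset.mem_erase]
        by_cases hii : i' = i
        · subst hii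
          rw [Function.update_self]
          simp only [Sigma.mk.inj_iff, heq_eq_eq, true_and]
          constructor
          · rintro ⟨-, hne⟩
            exact Or.inr (fun h0 => hne (Fin.ext (by rw [h0, Fin.val_zero])))
          · rintro (⟨h, -⟩ | h)
            · exact absurd rfl h
            · exact ⟨Or.inl hiU, fun h0 => h (by rw [h0, Fin.val_zero])⟩
        · rw [Function.update_of_ne hii]
          simp only [Sigma.mk.inj_iff]
          constructor
          · rintro ⟨h, -⟩
            rcases h with h | h
            · exact Or.inl ⟨hii, h⟩
            · exact Or.inr h
          · intro h
            refine ⟨?_, by rintro ⟨h1, -⟩; exact hii h1⟩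
            rcases h with ⟨-, h⟩ | h
            · exact Or.inl h
            · exact Or.inr h
      rw [hce]
      exact config_connectedOn hab (by rw [Finset.coe_erase]; exact hcon)
  exact ⟨U, g, hUtree, hgle, hg0, hconfig⟩

end Blowup4

section Blowup5

open scoped Classical

variable {δ : ℕ} {a b : Fin δ → V} {k : Fin δ → ℕ}
variable {G : Multigraph V (Fin δ)}

/-- The number of spanning trees of the blow-up. -/
lemma complexity_subdivide_eq (hab : ∀ i, G.ends i = s(a i, b i) ∧ a i ≠ b i) :
    (G.subdivideAll a b k).complexity
      = ∑ U ∈ Finset.univ.filter (fun U : Finset (Fin δ) => G.IsSpanningTree U),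
          ∏ i ∈ Uᶜ, (k i + 1) := by
  classical
  set D := Σ U : {U : Finset (Fin δ) // G.IsSpanningTree U},
    (∀ i : {i : Fin δ // i ∉ U.1}, Fin (k i.1 + 1)) with hD
  set gfun : (Σ U : {U : Finset (Fin δ) // G.IsSpanningTree U},
      (∀ i : {i : Fin δ // i ∉ U.1}, Fin (k i.1 + 1))) → Fin δ → ℕ :=
    fun d i => if h : i ∈ d.1.1 then 0 else (d.2 ⟨i, h⟩ : ℕ) with hgfun
  have hgle : ∀ d : D, ∀ i ∉ d.1.1, gfun d i ≤ k i := by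
    intro d i hi
    rw [hgfun]
    simp only [dif_neg hi]
    exact Nat.lt_succ_iff.mp (d.2 ⟨i, hi⟩).isLt
  have hgU : ∀ d : D, ∀ i ∈ d.1.1, gfun d i = 0 := by
    intro d i hi; rw [hgfun]; simp [hi]
  set f : D → ↥{S' : Finset (Σ i : Fin δ, Fin (k i + 1)) |
      (G.subdivideAll a b k).IsSpanningTree S'} :=
    fun d => ⟨config k d.1.1 (gfun d), config_isSpanningTree hab d.1.2 (hgle d)⟩ with hf
  have hinj : Function.Injective f := by
    rintro ⟨⟨U₁, h₁⟩, g₁⟩ ⟨⟨U₂, h₂⟩, g₂⟩ hEq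
    have hEq' : config k U₁ (gfun ⟨⟨U₁, h₁⟩, g₁⟩) = config k U₂ (gfun ⟨⟨U₂, h₂⟩, g₂⟩) :=
      congrArg Subtype.val hEq
    have hUmem : ∀ (U : Finset (Fin δ)) (hU : G.IsSpanningTree U)
        (g : ∀ i : {i : Fin δ // i ∉ U}, Fin (k i.1 + 1)) (i : Fin δ),
        i ∈ U ↔ ∀ t : Fin (k i + 1),
          (⟨i, t⟩ : Σ i : Fin δ, Fin (k i + 1)) ∈ config k U (gfun ⟨⟨U, hU⟩, g⟩) := by
      intro U hU g i
      constructor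
      · intro hi t; rw [mem_config]; exact Or.inl hi
      · intro hall
        by_contra hi
        have hle : gfun ⟨⟨U, hU⟩, g⟩ i ≤ k i := hgle _ i hi
        have := hall ⟨gfun ⟨⟨U, hU⟩, g⟩ i, by omega⟩
        rw [mem_config] at this
        rcases this with h | h
        · exact hi h
        · exact h rfl
    have hUU : U₁ = U₂ := by
      ext i
      rw [hUmem U₁ h₁ g₁ i, hUmem U₂ h₂ g₂ i, hEq']
    subst hUU
    have hgg : g₁ = g₂ := by
      funext i
      obtain ⟨i, hi⟩ := i
      apply Fin.ext
      by_contra hval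
      have hmem : (⟨i, (g₂ ⟨i, hi⟩ : Fin (k i + 1))⟩ : Σ i : Fin δ, Fin (k i + 1))
          ∈ config k U₁ (gfun ⟨⟨U₁, h₁⟩, g₁⟩) := by
        rw [mem_config]
        refine Or.inr ?_
        simp only [hgfun, dif_neg hi]
        exact fun h => hval (by simpa using h.symm)
      rw [hEq'] at hmem
      rw [mem_config] at hmem
      rcases hmem with h | h
      · exact hi h
      · exact h (by simp [hgfun, dif_neg hi])
    rw [hgg]
  have hsurj : Function.Surjective f := by
    rintro ⟨S', hS'⟩
    obtain ⟨U, g, hUtree, hgle', hg0, hconfig⟩ := tree_repr hab hS'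
    refine ⟨⟨⟨U, hUtree⟩, fun i => ⟨g i.1, by have := hgle' i.1 i.2; omega⟩⟩, ?_⟩
    apply Subtype.ext
    show config k U _ = S'
    rw [hconfig]
    congr 1
    funext i
    by_cases hi : i ∈ U
    · simp [hgfun, hi, (hg0 i hi).symm]
    · simp [hgfun, hi]
  have hcard : (G.subdivideAll a b k).complexity = Nat.card D := by
    rw [complexity, ← Nat.card_coe_set_eq]
    exact (Nat.card_congr (Equiv.ofBijective f ⟨hinj, hsurj⟩)).symm
  rw [hcard]
  letI : Fintype {U : Finset (Fin δ) // G.IsSpanningTree U} := Fintype.ofFinite _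
  rw [Nat.card_eq_fintype_card]
  have hcs : Fintype.card D = ∑ U : {U : Finset (Fin δ) // G.IsSpanningTree U},
      Fintype.card (∀ i : {i : Fin δ // i ∉ U.1}, Fin (k i.1 + 1)) := Fintype.card_sigma
  rw [hcs]
  have hpi : ∀ U : {U : Finset (Fin δ) // G.IsSpanningTree U},
      Fintype.card (∀ i : {i : Fin δ // i ∉ U.1}, Fin (k i.1 + 1)) = ∏ i ∈ U.1ᶜ, (k i + 1) := by
    intro U
    rw [Fintype.card_pi]
    simp only [Fintype.card_fin]
    exact (Finset.prod_subtype (p := fun i => i ∉ U.1) U.1ᶜ (fun i => by simp)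
      (fun i => k i + 1)).symm
  rw [Finset.sum_subtype (p := fun U : Finset (Fin δ) => G.IsSpanningTree U)
    (Finset.univ.filter (fun U : Finset (Fin δ) => G.IsSpanningTree U))
    (fun x => by simp) (fun U => ∏ i ∈ Uᶜ, (k i + 1))]
  exact Finset.sum_congr rfl (fun U _ => hpi U)

end Blowup5

section Blowup6

open scoped Classical

variable {δ : ℕ} {G : Multigraph V (Fin δ)}

lemma delete_adj {R : Set (Fin δ)} {S₀ : Set {f : Fin δ // f ∉ R}} {x y : V} :
    (G.deleteEdges R).Adj S₀ x y ↔ G.Adj (Subtype.val '' S₀) x y := by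
  constructor
  · rintro ⟨hne, e, he, hend⟩
    exact ⟨hne, e.1, ⟨e, he, rfl⟩, hend⟩
  · rintro ⟨hne, e', ⟨e, he, rfl⟩, hend⟩
    exact ⟨hne, e, he, hend⟩

lemma delete_connectedOn {R : Set (Fin δ)} {S₀ : Set {f : Fin δ // f ∉ R}} :
    (G.deleteEdges R).ConnectedOn S₀ ↔ G.ConnectedOn (Subtype.val '' S₀) := by
  have h : (G.deleteEdges R).Adj S₀ = G.Adj (Subtype.val '' S₀) := by
    funext x y; exact propext delete_adj
  unfold ConnectedOn
  rw [h]

lemma delete_isSpanningTree {R : Set (Fin δ)} (U' : Finset {f : Fin δ // f ∉ R}) :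
    (G.deleteEdges R).IsSpanningTree U'
      ↔ G.IsSpanningTree (U'.map (Function.Embedding.subtype _)) := by
  have hcoe : ∀ s : Finset {f : Fin δ // f ∉ R},
      (↑(s.map (Function.Embedding.subtype _)) : Set (Fin δ))
        = Subtype.val '' (↑s : Set {f : Fin δ // f ∉ R}) := by
    intro s; rw [Finset.coe_map]; rfl
  have hdiff : ∀ e : {f : Fin δ // f ∉ R},
      ((↑(U'.map (Function.Embedding.subtype _)) : Set (Fin δ)) \ {e.1})
        = Subtype.val '' ((↑U' : Set {f : Fin δ // f ∉ R}) \ {e}) := by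
    intro e
    rw [hcoe, Set.image_diff Subtype.val_injective, Set.image_singleton]
  constructor
  · rintro ⟨hc, hm⟩
    refine ⟨by rw [hcoe]; exact delete_connectedOn.mp hc, ?_⟩
    intro e' he'
    rw [Finset.mem_map] at he'
    obtain ⟨e, he, rfl⟩ := he'
    intro hcon
    rw [show ((Function.Embedding.subtype _) e : Fin δ) = e.1 from rfl, hdiff e] at hcon
    exact hm e he (delete_connectedOn.mpr hcon)
  · rintro ⟨hc, hm⟩
    refine ⟨delete_connectedOn.mpr (by rw [← hcoe]; exact hc), ?_⟩
    intro e he hcon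
    refine hm e.1 (Finset.mem_map_of_mem _ he) ?_
    rw [hdiff e]
    exact delete_connectedOn.mp hcon

lemma complexity_delete_eq (T : Finset (Fin δ)) :
    (G.deleteEdges (↑T : Set (Fin δ))).complexity
      = (Finset.univ.filter fun U : Finset (Fin δ) =>
          G.IsSpanningTree U ∧ ∀ i ∈ U, i ∉ T).card := by
  classical
  set f : ↥{U' : Finset {f : Fin δ // f ∉ (↑T : Set (Fin δ))} |
      (G.deleteEdges (↑T : Set (Fin δ))).IsSpanningTree U'} →
      ↥{U : Finset (Fin δ) | G.IsSpanningTree U ∧ ∀ i ∈ U, i ∉ T} :=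
    fun U' => ⟨U'.1.map (Function.Embedding.subtype _),
      (delete_isSpanningTree U'.1).mp U'.2, by
        intro i hi
        rw [Finset.mem_map] at hi
        obtain ⟨e, -, rfl⟩ := hi
        exact fun hT => e.2 (Finset.mem_coe.mpr hT)⟩ with hf
  have hinj : Function.Injective f := by
    intro u v h
    exact Subtype.ext (Finset.map_injective _ (congrArg Subtype.val h))
  have hsurj : Function.Surjective f := by
    rintro ⟨U, hU, hUT⟩
    have hsub : (U.subtype (fun i => i ∉ (↑T : Set (Fin δ)))).map
        (Function.Embedding.subtype _) = U :=
      Finset.subtype_map_of_mem (fun x hx hmem => hUT x hx (Finset.mem_coe.mp hmem))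
    refine ⟨⟨U.subtype (fun i => i ∉ (↑T : Set (Fin δ))), ?_⟩, Subtype.ext ?_⟩
    · show (G.deleteEdges (↑T : Set (Fin δ))).IsSpanningTree _
      rw [delete_isSpanningTree, hsub]
      exact hU
    · exact hsub
  rw [complexity, ← Nat.card_coe_set_eq,
    Nat.card_congr (Equiv.ofBijective f ⟨hinj, hsurj⟩), Nat.card_coe_set_eq]
  have hset : {U : Finset (Fin δ) | G.IsSpanningTree U ∧ ∀ i ∈ U, i ∉ T}
      = ↑(Finset.univ.filter fun U : Finset (Fin δ) =>
          G.IsSpanningTree U ∧ ∀ i ∈ U, i ∉ T) := by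
    ext U; simp
  rw [hset, Set.ncard_coe_finset]

end Blowup6

end BlowupAux

open Multigraph in
/-- General blow-up formula: subdividing the `i`-th edge into a path of `k i + 1` edges,
for every `i`, gives
`c(B_k(Γ)) = ∑_{T ⊆ S} (∏_{i ∈ T} k i) * c(Γ - {l_i : i ∈ T})`,
where `S = {i : k i ≠ 0}`. -/
theorem complexity_subdivideAll {V : Type} {δ : ℕ} [Fintype V] [DecidableEq V]
    (G : Multigraph V (Fin δ)) (hG : G.Connected)
    (a b : Fin δ → V) (hab : ∀ i, G.ends i = s(a i, b i) ∧ a i ≠ b i)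
    (k : Fin δ → ℕ) :
    (G.subdivideAll a b k).complexity =
      ∑ T ∈ (Finset.univ.filter fun i => k i ≠ 0).powerset,
        (∏ i ∈ T, k i) * (G.deleteEdges (↑T : Set (Fin δ))).complexity := by
  classical
  rw [BlowupAux.complexity_subdivide_eq hab]
  simp only [BlowupAux.complexity_delete_eq]
  symm
  calc
    ∑ T ∈ (Finset.univ.filter fun i => k i ≠ 0).powerset,
        (∏ i ∈ T, k i) * (Finset.univ.filter fun U : Finset (Fin δ) =>
          G.IsSpanningTree U ∧ ∀ i ∈ U, i ∉ T).card
      = ∑ T ∈ (Finset.univ.filter fun i => k i ≠ 0).powerset,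
          ∑ U ∈ Finset.univ.filter (fun U : Finset (Fin δ) => G.IsSpanningTree U),
            (if ∀ i ∈ U, i ∉ T then ∏ i ∈ T, k i else 0) := by
        refine Finset.sum_congr rfl fun T _ => ?_
        rw [← Finset.filter_filter, Finset.card_filter, Finset.mul_sum]
        simp [mul_ite]
    _ = ∑ U ∈ Finset.univ.filter (fun U : Finset (Fin δ) => G.IsSpanningTree U),
          ∑ T ∈ (Finset.univ.filter fun i => k i ≠ 0).powerset,
            (if ∀ i ∈ U, i ∉ T then ∏ i ∈ T, k i else 0) := Finset.sum_comm
    _ = ∑ U ∈ Finset.univ.filter (fun U : Finset (Fin δ) => G.IsSpanningTree U),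
          ∏ i ∈ Uᶜ, (k i + 1) := ?_
  refine Finset.sum_congr rfl fun U _ => ?_
  rw [← Finset.sum_filter]
  have hpow : ((Finset.univ.filter fun i => k i ≠ 0).powerset.filter
      (fun T => ∀ i ∈ U, i ∉ T)) = ((Finset.univ.filter fun i => k i ≠ 0) \ U).powerset := by
    ext T
    simp only [Finset.mem_filter, Finset.mem_powerset, Finset.mem_sdiff, Finset.subset_iff,
      Finset.mem_univ, true_and]
    constructor
    · rintro ⟨hTS, hd⟩ i hiT
      exact ⟨hTS hiT, fun hiU => hd i hiU hiT⟩
    · intro h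
      exact ⟨fun i hiT => (h hiT).1, fun i hiU hiT => (h hiT).2 hiU⟩
  rw [hpow]
  have hprod := Finset.prod_add k (fun _ => (1 : ℕ))
    ((Finset.univ.filter fun i => k i ≠ 0) \ U)
  simp only [Finset.prod_const_one, mul_one] at hprod
  rw [← hprod]
  refine Finset.prod_subset ?_ ?_
  · intro i hi
    rw [Finset.mem_sdiff] at hi
    exact Finset.mem_compl.mpr hi.2
  · intro i hi hni
    rw [Finset.mem_compl] at hi
    rw [Finset.mem_sdiff] at hni
    push_neg at hni
    have hk0 : k i = 0 := by
      by_contra hk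
      exact hi (hni (Finset.mem_filter.mpr ⟨Finset.mem_univ i, hk⟩))
    simp [hk0]
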